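/- arXiv:0910.4921 — 6 statements merged into one kernel-verified Lean document; each statement's English description precedes it below -/
import Mathlib

section
/- Let (M,d) be a complete cone metric space over a real Banach space E with a normal cone P with normal constant K, let T, R : M → M be injective and continuous maps, and let S : M → M be a continuous TR-contraction with constant a ∈ [0,1). Then for every x₀ ∈ M, the doubly indexed family d(T(Sⁿx₀), R(Sᵐx₀)) tends to 0 in E as n, m → ∞ (equivalently, ‖d(T(Sⁿx₀), R(Sᵐx₀))‖ → 0 as n, m → ∞). -/
open Filter

/-- `P` is a cone in the real Banach space `E`: nonempty, closed, not `{0}`,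
closed under nonnegative linear combinations, and `P ∩ (-P) = {0}`. -/
def IsCone {E : Type*} [NormedAddCommGroup E] [NormedSpace ℝ E] (P : Set E) : Prop :=
  P.Nonempty ∧ IsClosed P ∧ P ≠ {0} ∧
    (∀ (a b : ℝ), 0 ≤ a → 0 ≤ b → ∀ x ∈ P, ∀ y ∈ P, a • x + b • y ∈ P) ∧
    (∀ x ∈ P, -x ∈ P → x = 0)

/-- The partial order induced by the cone `P`: `x ≤ y` iff `y - x ∈ P`. -/
def ConeLe {E : Type*} [NormedAddCommGroup E] (P : Set E) (x y : E) : Prop :=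
  y - x ∈ P

/-- The strict order induced by the cone `P`: `x ≪ y` iff `y - x ∈ interior P`. -/
def ConeLt {E : Type*} [NormedAddCommGroup E] (P : Set E) (x y : E) : Prop :=
  y - x ∈ interior P

/-- `P` is a normal cone with normal constant `K`:
`K > 0` and `0 ≤ x ≤ y` implies `‖x‖ ≤ K * ‖y‖`. -/
def IsNormalCone {E : Type*} [NormedAddCommGroup E] (P : Set E) (K : ℝ) : Prop :=
  0 < K ∧ ∀ x y : E, ConeLe P 0 x → ConeLe P x y → ‖x‖ ≤ K * ‖y‖

/-- `d` is a cone metric on `M` with respect to the cone `P ⊆ E`. -/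
def IsConeMetric {E : Type*} [NormedAddCommGroup E] (P : Set E) {M : Type*}
    (d : M → M → E) : Prop :=
  (∀ x y : M, x ≠ y → ConeLe P 0 (d x y) ∧ d x y ≠ 0) ∧
  (∀ x y : M, d x y = 0 ↔ x = y) ∧
  (∀ x y : M, d x y = d y x) ∧
  (∀ x y z : M, ConeLe P (d x y) (d x z + d z y))

/-- Convergence of a sequence in a cone metric space:
for every `c` with `0 ≪ c` eventually `d (s n) l ≪ c`. -/
def ConeConverges {E : Type*} [NormedAddCommGroup E] (P : Set E) {M : Type*}
    (d : M → M → E) (s : ℕ → M) (l : M) : Prop :=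
  ∀ c : E, ConeLt P 0 c → ∃ n₀ : ℕ, ∀ n ≥ n₀, ConeLt P (d (s n) l) c

/-- Cauchy sequences in a cone metric space. -/
def ConeCauchy {E : Type*} [NormedAddCommGroup E] (P : Set E) {M : Type*}
    (d : M → M → E) (s : ℕ → M) : Prop :=
  ∀ c : E, ConeLt P 0 c → ∃ n₀ : ℕ, ∀ n ≥ n₀, ∀ m ≥ n₀, ConeLt P (d (s n) (s m)) c

/-- The cone metric space `(M, d)` is complete: every Cauchy sequence converges. -/
def ConeComplete {E : Type*} [NormedAddCommGroup E] (P : Set E) {M : Type*}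
    (d : M → M → E) : Prop :=
  ∀ s : ℕ → M, ConeCauchy P d s → ∃ l : M, ConeConverges P d s l

/-- The cone metric space `(M, d)` is sequentially compact:
every sequence has a convergent subsequence. -/
def ConeSeqCompact {E : Type*} [NormedAddCommGroup E] (P : Set E) {M : Type*}
    (d : M → M → E) : Prop :=
  ∀ s : ℕ → M, ∃ φ : ℕ → ℕ, StrictMono φ ∧ ∃ l : M, ConeConverges P d (fun i => s (φ i)) l

/-- `T : M → M` is continuous for the cone metric `d`: it preserves convergent sequences. -/
def ConeContinuousMap {E : Type*} [NormedAddCommGroup E] (P : Set E) {M : Type*}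
    (d : M → M → E) (T : M → M) : Prop :=
  ∀ (s : ℕ → M) (l : M), ConeConverges P d s l → ConeConverges P d (fun n => T (s n)) (T l)

/-- `T` is sequentially convergent: if `(T yₙ)` converges then `(yₙ)` converges. -/
def ConeSeqConvergent {E : Type*} [NormedAddCommGroup E] (P : Set E) {M : Type*}
    (d : M → M → E) (T : M → M) : Prop :=
  ∀ s : ℕ → M, (∃ l : M, ConeConverges P d (fun n => T (s n)) l) →
    ∃ l : M, ConeConverges P d s l

/-- `T` is subsequentially convergent: if `(T yₙ)` converges then `(yₙ)` has a
convergent subsequence. -/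
def ConeSubseqConvergent {E : Type*} [NormedAddCommGroup E] (P : Set E) {M : Type*}
    (d : M → M → E) (T : M → M) : Prop :=
  ∀ s : ℕ → M, (∃ l : M, ConeConverges P d (fun n => T (s n)) l) →
    ∃ φ : ℕ → ℕ, StrictMono φ ∧ ∃ l : M, ConeConverges P d (fun i => s (φ i)) l

theorem stmt0
    {E : Type*} [NormedAddCommGroup E] [NormedSpace ℝ E] [CompleteSpace E]
    {M : Type*} (P : Set E) (hP : IsCone P) (hPint : (interior P).Nonempty)
    (K : ℝ) (hK : IsNormalCone P K)
    (d : M → M → E) (hd : IsConeMetric P d) (hM : ConeComplete P d)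
    (T R : M → M) (hTinj : Function.Injective T) (hRinj : Function.Injective R)
    (hTc : ConeContinuousMap P d T) (hRc : ConeContinuousMap P d R)
    (S : M → M) (hSc : ConeContinuousMap P d S)
    (a : ℝ) (ha0 : 0 ≤ a) (ha1 : a < 1)
    (hS : ∀ x y : M, ConeLe P (d (T (S x)) (R (S y))) (a • d (T x) (R y)))
    (x₀ : M) :
    ∀ ε : ℝ, 0 < ε → ∃ N : ℕ, ∀ n ≥ N, ∀ m ≥ N,
      ‖d (T (S^[n] x₀)) (R (S^[m] x₀))‖ < ε := by

  intro ε hε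
  obtain ⟨hPne, hPcl, hPne0, hPlin, hPpoint⟩ := hP
  have hP0 : (0:E) ∈ P := by
    obtain ⟨x, hx⟩ := hPne
    simpa using hPlin 0 0 le_rfl le_rfl x hx x hx
  have hPadd : ∀ x ∈ P, ∀ y ∈ P, x + y ∈ P := by
    intro x hx y hy
    simpa using hPlin 1 1 zero_le_one zero_le_one x hx y hy
  have hPsmul : ∀ c : ℝ, 0 ≤ c → ∀ x ∈ P, c • x ∈ P := by
    intro c hc x hx
    simpa using hPlin c 0 hc le_rfl x hx x hx
  have hdge0 : ∀ x y : M, d x y ∈ P := by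
    intro x y
    by_cases h : x = y
    · subst h; rw [(hd.2.1 x x).mpr rfl]; exact hP0
    · have h1 := (hd.1 x y h).1
      unfold ConeLe at h1
      rwa [sub_zero] at h1
  have htri : ∀ x y z : M, d x z + d z y - d x y ∈ P := fun x y z => hd.2.2.2 x y z
  have hsymm : ∀ x y : M, d x y = d y x := hd.2.2.1
  have hle_trans : ∀ {x y z : E}, y - x ∈ P → z - y ∈ P → z - x ∈ P := by
    intro x y z h1 h2
    have h := hPadd _ h2 _ h1
    rwa [show z - y + (y - x) = z - x by abel] at h
  have hle_add : ∀ {x y x' y' : E}, y - x ∈ P → y' - x' ∈ P → (y + y') - (x + x') ∈ P := by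
    intro x y x' y' h1 h2
    have h := hPadd _ h1 _ h2
    rwa [show y - x + (y' - x') = y + y' - (x + x') by abel] at h
  have hrefl : ∀ x : E, x - x ∈ P := by
    intro x; rw [sub_self]; exact hP0
  obtain ⟨D, hD⟩ : ∃ D : E, D = d (T x₀) (R x₀) := ⟨_, rfl⟩
  obtain ⟨D', hD'⟩ : ∃ D' : E, D' = d (T (S x₀)) (R x₀) := ⟨_, rfl⟩
  obtain ⟨W, hW⟩ : ∃ W : E, W = D + D' := ⟨_, rfl⟩
  have hDP : D ∈ P := by rw [hD]; exact hdge0 _ _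
  have hD'P : D' ∈ P := by rw [hD']; exact hdge0 _ _
  have hWP : W ∈ P := by rw [hW]; exact hPadd _ hDP _ hD'P
  have hC1 : 0 < 1 - a := by linarith
  obtain ⟨C, hCdef⟩ : ∃ C : ℝ, C = 2 / (1 - a) := ⟨_, rfl⟩
  have hC : (1 - a) * C = 2 := by rw [hCdef]; field_simp
  have hCpos : 0 < C := by rw [hCdef]; positivity
  have hCge1 : 1 ≤ C := by nlinarith
  -- Lemma A : d(T Sⁱ, R Sⁱ) ≤ aⁱ • D
  have lemA : ∀ i : ℕ, a ^ i • D - d (T (S^[i] x₀)) (R (S^[i] x₀)) ∈ P := by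
    intro i
    induction i with
    | zero =>
      simp only [Function.iterate_zero_apply, pow_zero, one_smul, ← hD, sub_self]
      exact hP0
    | succ i ih =>
      rw [Function.iterate_succ_apply']
      have h1 := hS (S^[i] x₀) (S^[i] x₀)
      have h2 : a • (a ^ i • D) - a • d (T (S^[i] x₀)) (R (S^[i] x₀)) ∈ P := by
        rw [← smul_sub]; exact hPsmul a ha0 _ ih
      rw [pow_succ', ← smul_smul]
      exact hle_trans h1 h2
  -- Lemma B : d(T Sⁱ⁺¹, R Sⁱ) ≤ aⁱ • D'
  have lemB0 : ∀ i : ℕ, a ^ i • D' - d (T (S (S^[i] x₀))) (R (S^[i] x₀)) ∈ P := by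
    intro i
    induction i with
    | zero =>
      simp only [Function.iterate_zero_apply, pow_zero, one_smul, ← hD', sub_self]
      exact hP0
    | succ i ih =>
      rw [Function.iterate_succ_apply']
      have h1 := hS (S (S^[i] x₀)) (S^[i] x₀)
      have h2 : a • (a ^ i • D') - a • d (T (S (S^[i] x₀))) (R (S^[i] x₀)) ∈ P := by
        rw [← smul_sub]; exact hPsmul a ha0 _ ih
      rw [pow_succ', ← smul_smul]
      exact hle_trans h1 h2
  have lemB : ∀ i : ℕ, a ^ i • D' - d (T (S^[i+1] x₀)) (R (S^[i] x₀)) ∈ P := by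
    intro i
    rw [Function.iterate_succ_apply']
    exact lemB0 i
  -- aʲ • D ≤ (aʲ C) • W
  have hDW : ∀ j : ℕ, (a ^ j * C) • W - a ^ j • D ∈ P := by
    intro j
    have heq : (a ^ j * C) • W - a ^ j • D
        = (a ^ j * C - a ^ j) • D + (a ^ j * C) • D' := by
      rw [hW]; module
    rw [heq]
    refine hPadd _ (hPsmul _ ?_ _ hDP) _ (hPsmul _ ?_ _ hD'P)
    · have h := pow_nonneg ha0 j
      nlinarith
    · positivity
  -- forward chain
  have lemL : ∀ k n : ℕ, (a ^ n * C) • W - d (T (S^[n] x₀)) (R (S^[n+k] x₀)) ∈ P := by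
    intro k
    induction k with
    | zero => intro n; simpa using hle_trans (lemA n) (hDW n)
    | succ k ih =>
      intro n
      have b3 := ih (n+1)
      rw [show n + 1 + k = n + (k + 1) by omega] at b3
      have b1 := lemA n
      have b2 : a ^ n • D' - d (R (S^[n] x₀)) (T (S^[n+1] x₀)) ∈ P := by
        rw [hsymm]; exact lemB n
      have s1 := htri (T (S^[n] x₀)) (R (S^[n+(k+1)] x₀)) (T (S^[n+1] x₀))
      have s2 := hle_add (htri (T (S^[n] x₀)) (T (S^[n+1] x₀)) (R (S^[n] x₀)))
        (hrefl (d (T (S^[n+1] x₀)) (R (S^[n+(k+1)] x₀))))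
      have s3 := hle_add (hle_add b1 b2) b3
      have hsc : a ^ n * C - a ^ n - a ^ (n+1) * C = a ^ n := by
        rw [pow_succ]; linear_combination a ^ n * hC
      have s4 : (a ^ n * C) • W -
          ((a ^ n • D + a ^ n • D') + (a ^ (n+1) * C) • W) ∈ P := by
        have heq : (a ^ n * C) • W - ((a ^ n • D + a ^ n • D') + (a ^ (n+1) * C) • W)
            = (a ^ n * C - a ^ n - a ^ (n+1) * C) • W := by
          rw [hW]; module
        rw [heq, hsc]
        exact hPsmul _ (pow_nonneg ha0 n) _ hWP
      exact hle_trans (hle_trans (hle_trans s1 s2) s3) s4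
  -- backward chain
  have lemM : ∀ k m : ℕ, (a ^ m * C) • W - d (T (S^[m+k] x₀)) (R (S^[m] x₀)) ∈ P := by
    intro k
    induction k with
    | zero => intro m; simpa using hle_trans (lemA m) (hDW m)
    | succ k ih =>
      intro m
      have b3 := ih (m+1)
      rw [show m + 1 + k = m + (k + 1) by omega] at b3
      have b1 : a ^ (m+1) • D - d (R (S^[m+1] x₀)) (T (S^[m+1] x₀)) ∈ P := by
        rw [hsymm]; exact lemA (m+1)
      have b2 := lemB m
      have s1 := htri (T (S^[m+(k+1)] x₀)) (R (S^[m] x₀)) (T (S^[m+1] x₀))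
      have s2 := hle_add (htri (T (S^[m+(k+1)] x₀)) (T (S^[m+1] x₀)) (R (S^[m+1] x₀)))
        (hrefl (d (T (S^[m+1] x₀)) (R (S^[m] x₀))))
      have s3 := hle_add (hle_add b3 b1) b2
      have s4 : (a ^ m * C) • W -
          (((a ^ (m+1) * C) • W + a ^ (m+1) • D) + a ^ m • D') ∈ P := by
        have heq : (a ^ m * C) • W - (((a ^ (m+1) * C) • W + a ^ (m+1) • D) + a ^ m • D')
            = (a ^ m * C - a ^ (m+1) * C - a ^ (m+1)) • D
              + (a ^ m * C - a ^ (m+1) * C - a ^ m) • D' := by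
          rw [hW]; module
        rw [heq]
        refine hPadd _ (hPsmul _ ?_ _ hDP) _ (hPsmul _ ?_ _ hD'P)
        · have h1 : a ^ m * C - a ^ (m+1) * C - a ^ (m+1) = a ^ m * (2 - a) := by
            rw [pow_succ]; linear_combination a ^ m * hC
          rw [h1]
          exact mul_nonneg (pow_nonneg ha0 m) (by linarith)
        · have h1 : a ^ m * C - a ^ (m+1) * C - a ^ m = a ^ m := by
            rw [pow_succ]; linear_combination a ^ m * hC
          rw [h1]
          exact pow_nonneg ha0 m
      exact hle_trans (hle_trans (hle_trans s1 s2) s3) s4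
  -- conclusion
  obtain ⟨hKpos, hKnorm⟩ := hK
  have htend : Filter.Tendsto (fun n : ℕ => K * C * ‖W‖ * a ^ n) atTop (nhds 0) := by
    have h := tendsto_pow_atTop_nhds_zero_of_lt_one ha0 ha1
    simpa using h.const_mul (K * C * ‖W‖)
  obtain ⟨N, hN⟩ := Filter.eventually_atTop.mp (htend.eventually (gt_mem_nhds hε))
  refine ⟨N, ?_⟩
  intro n hn m hm
  have key : ∀ j n' m' : ℕ, N ≤ j →
      (a ^ j * C) • W - d (T (S^[n'] x₀)) (R (S^[m'] x₀)) ∈ P →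
      ‖d (T (S^[n'] x₀)) (R (S^[m'] x₀))‖ < ε := by
    intro j n' m' hj hmem
    have h0 : ConeLe P 0 (d (T (S^[n'] x₀)) (R (S^[m'] x₀))) := by
      unfold ConeLe; rw [sub_zero]; exact hdge0 _ _
    have hle : ConeLe P (d (T (S^[n'] x₀)) (R (S^[m'] x₀))) ((a ^ j * C) • W) := hmem
    have hnorm := hKnorm _ _ h0 hle
    have hsmul : ‖(a ^ j * C) • W‖ = (a ^ j * C) * ‖W‖ := by
      rw [norm_smul, Real.norm_eq_abs, abs_of_nonneg (by positivity)]
    have hpow : a ^ j ≤ a ^ N := pow_le_pow_of_le_one ha0 ha1.le hj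
    have hb : K * ((a ^ j * C) * ‖W‖) ≤ K * C * ‖W‖ * a ^ N := by
      have h1 : (a ^ j * C) * ‖W‖ ≤ (a ^ N * C) * ‖W‖ := by
        apply mul_le_mul_of_nonneg_right _ (norm_nonneg _)
        exact mul_le_mul_of_nonneg_right hpow hCpos.le
      calc K * ((a ^ j * C) * ‖W‖) ≤ K * ((a ^ N * C) * ‖W‖) :=
            mul_le_mul_of_nonneg_left h1 hKpos.le
        _ = K * C * ‖W‖ * a ^ N := by ring
    calc ‖d (T (S^[n'] x₀)) (R (S^[m'] x₀))‖ ≤ K * ‖(a ^ j * C) • W‖ := hnorm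
      _ = K * ((a ^ j * C) * ‖W‖) := by rw [hsmul]
      _ ≤ K * C * ‖W‖ * a ^ N := hb
      _ < ε := hN N le_rfl
  rcases le_total n m with h | h
  · obtain ⟨k, rfl⟩ := Nat.exists_eq_add_of_le h
    exact key n n (n + k) hn (lemL k n)
  · obtain ⟨k, rfl⟩ := Nat.exists_eq_add_of_le h
    exact key m (m + k) m hm (lemM k m)
end

section
/- Let (M,d) be a complete cone metric space over a real Banach space E with a normal cone P with normal constant K, let T, R : M → M be injective and continuous maps, and let S : M → M be a continuous TR-contraction with constant a ∈ [0,1). Then for every x₀ ∈ M there exist y₀, z₀ ∈ M such that the sequence (T(Sⁿx₀)) converges to y₀ and the sequence (R(Sⁿx₀)) converges to z₀ in the cone metric d. -/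
open Filter

open Finset in
lemma IsCone.zero_mem' {E : Type*} [NormedAddCommGroup E] [NormedSpace ℝ E] {P : Set E}
    (hP : IsCone P) : (0 : E) ∈ P := by
  obtain ⟨x, hx⟩ := hP.1
  have := hP.2.2.2.1 0 0 le_rfl le_rfl x hx x hx
  simpa using this

lemma IsCone.add_mem' {E : Type*} [NormedAddCommGroup E] [NormedSpace ℝ E] {P : Set E}
    (hP : IsCone P) {x y : E} (hx : x ∈ P) (hy : y ∈ P) : x + y ∈ P := by
  have := hP.2.2.2.1 1 1 zero_le_one zero_le_one x hx y hy
  simpa using this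

lemma IsCone.smul_mem' {E : Type*} [NormedAddCommGroup E] [NormedSpace ℝ E] {P : Set E}
    (hP : IsCone P) {c : ℝ} (hc : 0 ≤ c) {x : E} (hx : x ∈ P) : c • x ∈ P := by
  have := hP.2.2.2.1 c 0 hc le_rfl x hx x hx
  simpa using this

section ConeLemmas

variable {E : Type*} [NormedAddCommGroup E] [NormedSpace ℝ E] {P : Set E}

lemma coneLe_refl (hP : IsCone P) (x : E) : ConeLe P x x := by
  simpa [ConeLe] using hP.zero_mem'

lemma coneLe_trans (hP : IsCone P) {x y z : E} (h1 : ConeLe P x y) (h2 : ConeLe P y z) :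
    ConeLe P x z := by
  have := hP.add_mem' h2 h1
  simpa [ConeLe, sub_add_sub_cancel] using this

lemma coneLe_add (hP : IsCone P) {x y x' y' : E} (h1 : ConeLe P x y) (h2 : ConeLe P x' y') :
    ConeLe P (x + x') (y + y') := by
  have := hP.add_mem' h1 h2
  simpa [ConeLe, add_sub_add_comm] using this

lemma coneLe_smul (hP : IsCone P) {c : ℝ} (hc : 0 ≤ c) {x y : E} (h : ConeLe P x y) :
    ConeLe P (c • x) (c • y) := by
  have := hP.smul_mem' hc h
  simpa [ConeLe, smul_sub] using this

lemma coneLe_smul_of_le (hP : IsCone P) {c c' : ℝ} (h : c ≤ c') {x : E} (hx : x ∈ P) :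
    ConeLe P (c • x) (c' • x) := by
  have := hP.smul_mem' (sub_nonneg.2 h) hx
  simpa [ConeLe, sub_smul] using this

lemma coneMetric_mem {M : Type*} {d : M → M → E} (hP : IsCone P) (hd : IsConeMetric P d)
    (x y : M) : d x y ∈ P := by
  by_cases h : x = y
  · rw [(hd.2.1 x y).2 h]; exact hP.zero_mem'
  · have := (hd.1 x y h).1
    simpa [ConeLe] using this

open Finset in
lemma geom_sum_Ico_le {a : ℝ} (ha0 : 0 ≤ a) (ha1 : a < 1) (n m : ℕ) :
    (∑ k ∈ Finset.Ico n m, a ^ k) ≤ a ^ n / (1 - a) := by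
  have h1a : (0:ℝ) < 1 - a := by linarith
  rcases le_or_gt n m with hnm | hnm
  · rw [Finset.sum_Ico_eq_sum_range]
    have : ∀ i, a ^ (n + i) = a ^ n * a ^ i := fun i => pow_add a n i
    simp_rw [this, ← Finset.mul_sum]
    have hgs : (∑ i ∈ Finset.range (m - n), a ^ i) ≤ 1 / (1 - a) := by
      rw [geom_sum_eq ha1.ne]
      have : (a ^ (m - n) - 1) / (a - 1) = (1 - a ^ (m - n)) / (1 - a) := by
        rw [← neg_div_neg_eq]; ring_nf
      rw [this, div_le_div_iff₀ h1a h1a]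
      nlinarith [pow_nonneg ha0 (m - n)]
    calc a ^ n * ∑ i ∈ Finset.range (m - n), a ^ i
        ≤ a ^ n * (1 / (1 - a)) := by
          exact mul_le_mul_of_nonneg_left hgs (pow_nonneg ha0 n)
      _ = a ^ n / (1 - a) := by ring
  · rw [Finset.Ico_eq_empty (by omega), Finset.sum_empty]
    positivity

open Finset in
lemma cone_cauchy_of_geom {M : Type*} (hP : IsCone P) {K : ℝ} (hK : IsNormalCone P K)
    {d : M → M → E} (hd : IsConeMetric P d)
    {a : ℝ} (ha0 : 0 ≤ a) (ha1 : a < 1) {B : E} (hB : B ∈ P) {u : ℕ → M}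
    (hu : ∀ n, ConeLe P (d (u n) (u (n + 1))) (a ^ n • B)) : ConeCauchy P d u := by
  have h1a : (0:ℝ) < 1 - a := by linarith
  -- sum bound
  have key1 : ∀ n m : ℕ, n ≤ m →
      ConeLe P (d (u n) (u m)) ((∑ k ∈ Finset.Ico n m, a ^ k) • B) := by
    intro n m hnm
    induction m, hnm using Nat.le_induction with
    | base =>
      rw [Finset.Ico_self, Finset.sum_empty, zero_smul, (hd.2.1 (u n) (u n)).2 rfl]
      exact coneLe_refl hP 0
    | succ m hm ih =>
      have tri := hd.2.2.2 (u n) (u (m + 1)) (u m)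
      have h2 := coneLe_add hP ih (hu m)
      rw [Finset.sum_Ico_succ_top hm, add_smul]
      exact coneLe_trans hP tri h2
  have key : ∀ n m : ℕ, n ≤ m →
      ConeLe P (d (u n) (u m)) ((a ^ n / (1 - a)) • B) := fun n m hnm =>
    coneLe_trans hP (key1 n m hnm) (coneLe_smul_of_le hP (geom_sum_Ico_le ha0 ha1 n m) hB)
  have hnorm : ∀ n m : ℕ, n ≤ m →
      ‖d (u n) (u m)‖ ≤ K * ((a ^ n / (1 - a)) * ‖B‖) := by
    intro n m hnm
    have h0 : ConeLe P 0 (d (u n) (u m)) := by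
      simpa [ConeLe] using coneMetric_mem hP hd (u n) (u m)
    have := hK.2 (d (u n) (u m)) ((a ^ n / (1 - a)) • B) h0 (key n m hnm)
    rwa [norm_smul, Real.norm_eq_abs, abs_of_nonneg (by positivity)] at this
  intro c hc
  have hcint : c ∈ interior P := by simpa [ConeLt] using hc
  obtain ⟨ε, hε, hball⟩ := Metric.mem_nhds_iff.1 (isOpen_interior.mem_nhds hcint)
  have htend : Filter.Tendsto (fun n : ℕ => K * ((a ^ n / (1 - a)) * ‖B‖)) Filter.atTop
      (nhds 0) := by
    have := (tendsto_pow_atTop_nhds_zero_of_lt_one ha0 ha1).const_mul (K / (1 - a) * ‖B‖)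
    simp only [mul_zero] at this
    convert this using 2 with n
    ring
  obtain ⟨n₀, hn₀⟩ := Filter.eventually_atTop.1 (htend.eventually (gt_mem_nhds hε))
  refine ⟨n₀, fun n hn m hm => ?_⟩
  have hlt : ‖d (u n) (u m)‖ < ε := by
    rcases le_total n m with h | h
    · exact lt_of_le_of_lt (hnorm n m h) (hn₀ n hn)
    · rw [hd.2.2.1 (u n) (u m)]
      exact lt_of_le_of_lt (hnorm m n h) (hn₀ m hm)
  show c - d (u n) (u m) ∈ interior P
  apply hball
  rw [Metric.mem_ball, dist_eq_norm]
  simpa using hlt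

end ConeLemmas

theorem stmt1
    {E : Type*} [NormedAddCommGroup E] [NormedSpace ℝ E] [CompleteSpace E]
    {M : Type*} (P : Set E) (hP : IsCone P) (hPint : (interior P).Nonempty)
    (K : ℝ) (hK : IsNormalCone P K)
    (d : M → M → E) (hd : IsConeMetric P d) (hM : ConeComplete P d)
    (T R : M → M) (hTinj : Function.Injective T) (hRinj : Function.Injective R)
    (hTc : ConeContinuousMap P d T) (hRc : ConeContinuousMap P d R)
    (S : M → M) (hSc : ConeContinuousMap P d S)
    (a : ℝ) (ha0 : 0 ≤ a) (ha1 : a < 1)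
    (hS : ∀ x y : M, ConeLe P (d (T (S x)) (R (S y))) (a • d (T x) (R y)))
    (x₀ : M) :
    ∃ y₀ z₀ : M,
      ConeConverges P d (fun n => T (S^[n] x₀)) y₀ ∧
      ConeConverges P d (fun n => R (S^[n] x₀)) z₀ := by
  classical
  set s : ℕ → M := fun n => T (S^[n] x₀) with hs
  set t : ℕ → M := fun n => R (S^[n] x₀) with ht
  set f : ℕ → E := fun n => d (s n) (t n) with hfdef
  set g : ℕ → E := fun n => d (s (n + 1)) (t n) with hgdef
  have hiter : ∀ n, S^[n + 1] x₀ = S (S^[n] x₀) := fun n =>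
    Function.iterate_succ_apply' S n x₀
  have hf : ∀ n, ConeLe P (f n) (a ^ n • f 0) := by
    intro n
    induction n with
    | zero => simpa using coneLe_refl hP (f 0)
    | succ n ih =>
      have h1 : ConeLe P (f (n + 1)) (a • f n) := by
        have h := hS (S^[n] x₀) (S^[n] x₀)
        rw [← hiter n] at h
        exact h
      have h2 := coneLe_smul hP ha0 ih
      have h3 : a • a ^ n • f 0 = a ^ (n + 1) • f 0 := by
        rw [smul_smul, ← pow_succ']
      rw [h3] at h2
      exact coneLe_trans hP h1 h2
  have hg : ∀ n, ConeLe P (g n) (a ^ n • g 0) := by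
    intro n
    induction n with
    | zero => simpa using coneLe_refl hP (g 0)
    | succ n ih =>
      have h1 : ConeLe P (g (n + 1)) (a • g n) := by
        have h := hS (S^[n+1] x₀) (S^[n] x₀)
        rw [← hiter n, ← hiter (n + 1)] at h
        exact h
      have h2 := coneLe_smul hP ha0 ih
      have h3 : a • a ^ n • g 0 = a ^ (n + 1) • g 0 := by
        rw [smul_smul, ← pow_succ']
      rw [h3] at h2
      exact coneLe_trans hP h1 h2
  have hf0 : f 0 ∈ P := coneMetric_mem hP hd _ _
  have hg0 : g 0 ∈ P := coneMetric_mem hP hd _ _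
  set B : E := f 0 + g 0 with hBdef
  have hB : B ∈ P := hP.add_mem' hf0 hg0
  -- Cauchy for s
  have hsC : ConeCauchy P d s := by
    refine cone_cauchy_of_geom hP hK hd ha0 ha1 hB (fun n => ?_)
    have tri : ConeLe P (d (s n) (s (n + 1))) (d (s n) (t n) + d (t n) (s (n + 1))) :=
      hd.2.2.2 (s n) (s (n + 1)) (t n)
    have hsym : d (t n) (s (n + 1)) = g n := hd.2.2.1 (t n) (s (n + 1))
    rw [hsym] at tri
    have hbd := coneLe_add hP (hf n) (hg n)
    rw [← smul_add] at hbd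
    exact coneLe_trans hP tri hbd
  -- Cauchy for t
  have htC : ConeCauchy P d t := by
    refine cone_cauchy_of_geom hP hK hd ha0 ha1 hB (fun n => ?_)
    have tri : ConeLe P (d (t n) (t (n + 1))) (d (t n) (s (n + 1)) + d (s (n + 1)) (t (n + 1))) :=
      hd.2.2.2 (t n) (t (n + 1)) (s (n + 1))
    have hsym : d (t n) (s (n + 1)) = g n := hd.2.2.1 (t n) (s (n + 1))
    rw [hsym] at tri
    have hf' : ConeLe P (f (n + 1)) (a ^ n • f 0) := by
      refine coneLe_trans hP (hf (n + 1)) (coneLe_smul_of_le hP ?_ hf0)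
      exact pow_le_pow_of_le_one ha0 ha1.le (Nat.le_succ n)
    have hbd := coneLe_add hP (hg n) hf'
    rw [← smul_add] at hbd
    have hcomm : g 0 + f 0 = B := by rw [hBdef, add_comm]
    rw [hcomm] at hbd
    exact coneLe_trans hP tri hbd
  obtain ⟨y₀, hy₀⟩ := hM s hsC
  obtain ⟨z₀, hz₀⟩ := hM t htC
  exact ⟨y₀, z₀, hy₀, hz₀⟩
end

section
/- Let (M,d) be a cone metric space over a real Banach space E with cone P, let T, R, S : M → M with d(T(Sx), R(Sy)) ≤ a·d(Tx, Ry) for all x, y ∈ M and some a ∈ [0,1), let x₀ ∈ M and c ∈ E, and suppose d(T(Sx₀), Tx₀) ≤ (1−a)·c. Then for every x ∈ M with d(Tx₀, Rx) ≤ c one has d(Tx₀, R(Sx)) ≤ c; that is, the map x ↦ Sx sends points whose R-image lies in the ball B(Tx₀, c) = { y ∈ M : d(Tx₀, y) ≤ c } to points whose R-image lies in B(Tx₀, c). -/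
open Filter

theorem stmt8
    {E : Type*} [NormedAddCommGroup E] [NormedSpace ℝ E]
    {M : Type*} (P : Set E) (hP : IsCone P) (hPint : (interior P).Nonempty)
    (d : M → M → E) (hd : IsConeMetric P d)
    (T R S : M → M)
    (a : ℝ) (ha0 : 0 ≤ a) (ha1 : a < 1)
    (hS : ∀ x y : M, ConeLe P (d (T (S x)) (R (S y))) (a • d (T x) (R y)))
    (x₀ : M) (c : E)
    (hx₀ : ConeLe P (d (T (S x₀)) (T x₀)) ((1 - a) • c)) :
    ∀ x : M, ConeLe P (d (T x₀) (R x)) c → ConeLe P (d (T x₀) (R (S x))) c := by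
  intro x hx
  obtain ⟨-, -, -, hadd, -⟩ := hP
  have padd : ∀ u ∈ P, ∀ v ∈ P, u + v ∈ P := by
    intro u hu v hv
    simpa using hadd 1 1 zero_le_one zero_le_one u hu v hv
  have psmul : ∀ u ∈ P, a • u ∈ P := by
    intro u hu
    simpa using hadd a 0 ha0 le_rfl u hu u hu
  have h1 : d (T x₀) (T (S x₀)) + d (T (S x₀)) (R (S x)) - d (T x₀) (R (S x)) ∈ P :=
    hd.2.2.2 (T x₀) (R (S x)) (T (S x₀))
  have h2 : a • d (T x₀) (R x) - d (T (S x₀)) (R (S x)) ∈ P := hS x₀ x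
  have h3 : a • (c - d (T x₀) (R x)) ∈ P := psmul _ hx
  have h4 : (1 - a) • c - d (T (S x₀)) (T x₀) ∈ P := hx₀
  have key := padd _ (padd _ (padd _ h1 _ h2) _ h3) _ h4
  have hsymm : d (T x₀) (T (S x₀)) = d (T (S x₀)) (T x₀) := hd.2.2.1 _ _
  have : c - d (T x₀) (R (S x)) =
      (d (T x₀) (T (S x₀)) + d (T (S x₀)) (R (S x)) - d (T x₀) (R (S x))) +
        (a • d (T x₀) (R x) - d (T (S x₀)) (R (S x))) +
        a • (c - d (T x₀) (R x)) +
        ((1 - a) • c - d (T (S x₀)) (T x₀)) := by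
    rw [hsymm]
    simp only [smul_sub, sub_smul, one_smul]
    abel
  unfold ConeLe
  rw [this]
  exact key
end

section
/- Let (M,d) be a cone metric space over a real Banach space E with a normal cone P with normal constant K, and let (xₙ) be a sequence in M. Then (xₙ) converges to x ∈ M (in the cone-metric sense) if and only if ‖d(xₙ, x)‖ → 0 as n → ∞. -/
open Filter

open Pointwise in
lemma aux_smul_interior {E : Type*} [NormedAddCommGroup E] [NormedSpace ℝ E] {P : Set E}
    {t : ℝ} (ht : 0 < t) (hsmul : ∀ y ∈ P, t • y ∈ P) {c : E} (hc : c ∈ interior P) :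
    t • c ∈ interior P := by
  have hopen : IsOpen (t • interior P) := isOpen_interior.smul₀ (ne_of_gt ht)
  have hsub : t • interior P ⊆ P := by
    rintro _ ⟨y, hy, rfl⟩
    exact hsmul y (interior_subset hy)
  exact interior_maximal hsub hopen (Set.smul_mem_smul_set hc)

theorem stmt13
    {E : Type*} [NormedAddCommGroup E] [NormedSpace ℝ E]
    {M : Type*} (P : Set E) (hP : IsCone P) (hPint : (interior P).Nonempty)
    (K : ℝ) (hK : IsNormalCone P K)
    (d : M → M → E) (hd : IsConeMetric P d)
    (s : ℕ → M) (x : M) :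
    ConeConverges P d s x ↔ Tendsto (fun n => ‖d (s n) x‖) atTop (nhds 0) := by
  obtain ⟨⟨p0, hp0⟩, hPclosed, hPne, hconv, hanti⟩ := hP
  have h0P : (0 : E) ∈ P := by
    have := hconv 0 0 le_rfl le_rfl p0 hp0 p0 hp0
    simpa using this
  have hsmul : ∀ (t : ℝ), 0 ≤ t → ∀ y ∈ P, t • y ∈ P := by
    intro t ht y hy
    have := hconv t 0 ht le_rfl y hy y hy
    simpa using this
  have hdP : ∀ n, d (s n) x ∈ P := by
    intro n
    by_cases h : s n = x
    · rw [(hd.2.1 (s n) x).2 h]; exact h0P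
    · have := (hd.1 (s n) x h).1
      simpa [ConeLe] using this
  constructor
  · intro hcv
    rw [Metric.tendsto_atTop]
    intro ε hε
    obtain ⟨c₀, hc₀⟩ := hPint
    have hc₀P : c₀ ∈ P := interior_subset hc₀
    have hc₀ne : c₀ ≠ 0 := by
      intro h
      subst h
      obtain ⟨r, hr, hball⟩ := Metric.isOpen_iff.1 isOpen_interior 0 hc₀
      -- P contains a ball around 0, contradiction with antisymmetry
      have hEnt : ∃ y : E, y ≠ 0 := by
        by_contra h
        push_neg at h
        apply hPne
        ext z
        simp [h z, h0P]
      obtain ⟨y, hy⟩ := hEnt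
      set z := (r / (2 * ‖y‖)) • y with hz
      have hyn : (0:ℝ) < ‖y‖ := norm_pos_iff.2 hy
      have hzn : ‖z‖ = r / 2 := by
        rw [hz, norm_smul, Real.norm_eq_abs, abs_of_pos (by positivity)]
        field_simp
      have hzP : z ∈ P := interior_subset (hball (by
        simp [Metric.mem_ball, dist_eq_norm, hzn]; linarith))
      have hznegP : -z ∈ P := interior_subset (hball (by
        simp [Metric.mem_ball, dist_eq_norm, hzn]; linarith))
      have : z = 0 := hanti z hzP hznegP
      rw [hz] at this
      have : y = 0 := by
        have hne : r / (2 * ‖y‖) ≠ 0 := by positivity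
        exact (smul_eq_zero.1 this).resolve_left hne
      exact hy this
    have hc₀n : (0:ℝ) < ‖c₀‖ := norm_pos_iff.2 hc₀ne
    obtain ⟨hKpos, hKnorm⟩ := hK
    set t : ℝ := ε / (2 * K * ‖c₀‖) with ht
    have htpos : 0 < t := by positivity
    have hcint : t • c₀ ∈ interior P :=
      aux_smul_interior htpos (hsmul t htpos.le) hc₀
    obtain ⟨n₀, hn₀⟩ := hcv (t • c₀) (by simpa [ConeLt] using hcint)
    refine ⟨n₀, fun n hn => ?_⟩
    have hle : ConeLe P (d (s n) x) (t • c₀) :=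
      interior_subset (hn₀ n hn)
    have h0le : ConeLe P 0 (d (s n) x) := by simpa [ConeLe] using hdP n
    have hnorm := hKnorm _ _ h0le hle
    have hcnorm : ‖t • c₀‖ = ε / (2 * K) := by
      rw [norm_smul, Real.norm_eq_abs, abs_of_pos htpos, ht]
      field_simp
    rw [hcnorm] at hnorm
    have : K * (ε / (2 * K)) = ε / 2 := by field_simp
    rw [Real.dist_eq, sub_zero, abs_of_nonneg (norm_nonneg _)]
    calc ‖d (s n) x‖ ≤ ε / 2 := by rw [this] at hnorm; exact hnorm
      _ < ε := by linarith
  · intro htd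
    intro c hc
    have hcint : c ∈ interior P := by simpa [ConeLt] using hc
    obtain ⟨r, hr, hball⟩ := Metric.isOpen_iff.1 isOpen_interior c hcint
    rw [Metric.tendsto_atTop] at htd
    obtain ⟨n₀, hn₀⟩ := htd r hr
    refine ⟨n₀, fun n hn => ?_⟩
    have hdn : ‖d (s n) x‖ < r := by
      have := hn₀ n hn
      rwa [Real.dist_eq, sub_zero, abs_of_nonneg (norm_nonneg _)] at this
    have : c - d (s n) x ∈ Metric.ball c r := by
      simp [Metric.mem_ball, dist_eq_norm, hdn]
    simpa [ConeLt] using hball this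
end

section
/- Let (M,d) be a cone metric space over a real Banach space E with a normal cone P with normal constant K, and let (xₙ) be a sequence in M. Then (xₙ) is a Cauchy sequence (in the cone-metric sense) if and only if ‖d(xₙ, xₘ)‖ → 0 as n, m → ∞. -/
open Filter
open Pointwise

theorem stmt15
    {E : Type*} [NormedAddCommGroup E] [NormedSpace ℝ E]
    {M : Type*} (P : Set E) (hP : IsCone P) (hPint : (interior P).Nonempty)
    (K : ℝ) (hK : IsNormalCone P K)
    (d : M → M → E) (hd : IsConeMetric P d)
    (s : ℕ → M) :
    ConeCauchy P d s ↔
      ∀ ε : ℝ, 0 < ε → ∃ N : ℕ, ∀ n ≥ N, ∀ m ≥ N, ‖d (s n) (s m)‖ < ε := by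
  obtain ⟨e, he⟩ := hPint
  have hzeroP : (0 : E) ∈ P := by
    obtain ⟨x, hx⟩ := hP.1
    have := hP.2.2.2.1 0 0 le_rfl le_rfl x hx x hx
    simpa using this
  have hdP : ∀ n m : ℕ, d (s n) (s m) ∈ P := by
    intro n m
    by_cases h : s n = s m
    · rw [(hd.2.1 _ _).2 h]; exact hzeroP
    · have := (hd.1 _ _ h).1
      simpa [ConeLe] using this
  constructor
  · intro hc ε hε
    set δ : ℝ := ε / (K * (‖e‖ + 1)) with hδdef
    have hKpos := hK.1
    have hden : 0 < K * (‖e‖ + 1) := by positivity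
    have hδ : 0 < δ := div_pos hε hden
    have hsmulP : δ • P ⊆ P := by
      rintro _ ⟨x, hx, rfl⟩
      have := hP.2.2.2.1 δ 0 hδ.le le_rfl x hx x hx
      simpa using this
    have hce : δ • e ∈ interior P := by
      have h1 : δ • interior P ⊆ interior P := by
        rw [← interior_smul₀ hδ.ne' P]
        exact interior_mono hsmulP
      exact h1 ⟨e, he, rfl⟩
    obtain ⟨n₀, hn₀⟩ := hc (δ • e) (by simpa [ConeLt] using hce)
    refine ⟨n₀, fun n hn m hm => ?_⟩
    have hlt := hn₀ n hn m hm
    have hle : ConeLe P (d (s n) (s m)) (δ • e) :=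
      interior_subset hlt
    have hnorm : ‖d (s n) (s m)‖ ≤ K * ‖δ • e‖ :=
      hK.2 _ _ (by simpa [ConeLe] using hdP n m) hle
    have : K * ‖δ • e‖ < ε := by
      rw [norm_smul, Real.norm_of_nonneg hδ.le]
      have h2 : δ * ‖e‖ < ε / K := by
        rw [hδdef, div_mul_eq_mul_div, div_lt_div_iff₀ hden hKpos]
        nlinarith [norm_nonneg e]
      calc K * (δ * ‖e‖) < K * (ε / K) := (mul_lt_mul_iff_right₀ hKpos).2 h2
        _ = ε := by field_simp
    linarith
  · intro h c hc
    obtain ⟨r, hr, hball⟩ := Metric.isOpen_iff.mp isOpen_interior c (by simpa [ConeLt] using hc)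
    obtain ⟨N, hN⟩ := h r hr
    refine ⟨N, fun n hn m hm => ?_⟩
    have : c - d (s n) (s m) ∈ Metric.ball c r := by
      rw [Metric.mem_ball, dist_eq_norm]
      simpa using hN n hn m hm
    simpa [ConeLt] using hball this
end

section
/- Let (M,d) be a cone metric space over a real Banach space E with a normal cone P with normal constant K. If (xₙ) and (yₙ) are sequences in M with xₙ → x and yₙ → y (in the cone-metric sense), then d(xₙ, yₙ) → d(x, y) in E, i.e. ‖d(xₙ,yₙ) − d(x,y)‖ → 0 as n → ∞. -/
open Filter

open scoped Pointwise in
theorem stmt17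
    {E : Type*} [NormedAddCommGroup E] [NormedSpace ℝ E]
    {M : Type*} (P : Set E) (hP : IsCone P) (hPint : (interior P).Nonempty)
    (K : ℝ) (hK : IsNormalCone P K)
    (d : M → M → E) (hd : IsConeMetric P d)
    (s t : ℕ → M) (x y : M)
    (hx : ConeConverges P d s x) (hy : ConeConverges P d t y) :
    Tendsto (fun n => ‖d (s n) (t n) - d x y‖) atTop (nhds 0) := by
  obtain ⟨hne, _, _, hquad, _⟩ := hP
  obtain ⟨hKpos, hnorm⟩ := hK
  obtain ⟨hpos, heqd, hsymm, htri⟩ := hd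
  obtain ⟨p0, hp0⟩ := hne
  have h0P : (0:E) ∈ P := by
    have := hquad 0 0 le_rfl le_rfl p0 hp0 p0 hp0
    simpa using this
  have haddP : ∀ u ∈ P, ∀ v ∈ P, u + v ∈ P := by
    intro u hu v hv
    have := hquad 1 1 zero_le_one zero_le_one u hu v hv
    simpa using this
  have hdnn : ∀ a b : M, d a b ∈ P := by
    intro a b
    by_cases h : a = b
    · simpa [(heqd a b).2 h] using h0P
    · simpa [ConeLe] using (hpos a b h).1
  obtain ⟨c₀, hc₀⟩ := hPint
  have hsmul : ∀ r : ℝ, 0 < r → r • c₀ ∈ interior P := by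
    intro r hr
    have hopen : IsOpen (r • interior P) := isOpen_interior.smul₀ (ne_of_gt hr)
    have hsub : r • interior P ⊆ P := by
      rintro _ ⟨z, hz, rfl⟩
      have := hquad r 0 hr.le le_rfl z (interior_subset hz) z (interior_subset hz)
      simpa using this
    exact interior_maximal hsub hopen ⟨c₀, hc₀, rfl⟩
  rw [Metric.tendsto_atTop]
  intro ε hε
  set r : ℝ := ε / (4 * K * (2 * K + 1) * (‖c₀‖ + 1)) with hr_def
  have hden : 0 < 4 * K * (2 * K + 1) * (‖c₀‖ + 1) := by positivity
  have hr : 0 < r := div_pos hε hden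
  set c : E := r • c₀ with hc_def
  have hcP : c ∈ interior P := hsmul r hr
  have hclt : ConeLt P 0 c := by simpa [ConeLt] using hcP
  have hcnorm : ‖c‖ ≤ ε / (4 * K * (2 * K + 1)) := by
    have : ‖c‖ = r * ‖c₀‖ := by
      rw [hc_def, norm_smul, Real.norm_eq_abs, abs_of_pos hr]
    rw [this, hr_def]
    rw [div_mul_eq_mul_div, div_le_div_iff₀ hden (by positivity)]
    have h1 : ‖c₀‖ ≤ ‖c₀‖ + 1 := by linarith
    nlinarith [hε.le, norm_nonneg c₀, mul_pos (by positivity : (0:ℝ) < 4 * K * (2*K+1)) hε]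
  obtain ⟨n₁, hn₁⟩ := hx c hclt
  obtain ⟨n₂, hn₂⟩ := hy c hclt
  refine ⟨max n₁ n₂, fun n hn => ?_⟩
  have hns := hn₁ n (le_trans (le_max_left _ _) hn)
  have hnt := hn₂ n (le_trans (le_max_right _ _) hn)
  set ds := d (s n) x with hds_def
  set dt := d (t n) y with hdt_def
  -- norm bounds on ds, dt
  have hdsle : ds ∈ P ∧ c - ds ∈ P :=
    ⟨hdnn _ _, interior_subset (by simpa [ConeLt] using hns)⟩
  have hdtle : dt ∈ P ∧ c - dt ∈ P :=
    ⟨hdnn _ _, interior_subset (by simpa [ConeLt] using hnt)⟩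
  have hdsn : ‖ds‖ ≤ K * ‖c‖ := by
    apply hnorm
    · simpa [ConeLe] using hdsle.1
    · simpa [ConeLe] using hdsle.2
  have hdtn : ‖dt‖ ≤ K * ‖c‖ := by
    apply hnorm
    · simpa [ConeLe] using hdtle.1
    · simpa [ConeLe] using hdtle.2
  set u := d (s n) (t n) - d x y with hu_def
  set a := ds + dt with ha_def
  -- a - u ∈ P
  have hAmU : a - u ∈ P := by
    have hA : d (s n) x + d x (t n) - d (s n) (t n) ∈ P := by
      simpa [ConeLe] using htri (s n) (t n) x
    have hB : d x y + d y (t n) - d x (t n) ∈ P := by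
      simpa [ConeLe] using htri x (t n) y
    have := haddP _ hA _ hB
    have hsy : d y (t n) = dt := by rw [hdt_def, hsymm]
    rw [show d (s n) x + d x (t n) - d (s n) (t n) + (d x y + d y (t n) - d x (t n))
        = ds + d y (t n) - (d (s n) (t n) - d x y) by rw [hds_def]; abel] at this
    rw [hsy] at this
    simpa [ha_def, hu_def] using this
  -- a + u ∈ P
  have hApU : a + u ∈ P := by
    have hA : d x (s n) + d (s n) y - d x y ∈ P := by
      simpa [ConeLe] using htri x y (s n)
    have hB : d (s n) (t n) + d (t n) y - d (s n) y ∈ P := by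
      simpa [ConeLe] using htri (s n) y (t n)
    have := haddP _ hA _ hB
    have hs1 : d x (s n) = ds := by rw [hds_def, hsymm]
    have hs2 : d (t n) y = dt := by rw [hdt_def]
    rw [show d x (s n) + d (s n) y - d x y + (d (s n) (t n) + d (t n) y - d (s n) y)
        = d x (s n) + d (t n) y + (d (s n) (t n) - d x y) by abel] at this
    rw [hs1, hs2] at this
    simpa [ha_def, hu_def, add_comm] using this
  have hnormau : ‖a + u‖ ≤ K * ‖(2:ℝ) • a‖ := by
    apply hnorm
    · simpa [ConeLe] using hApU
    · have : (2:ℝ) • a - (a + u) = a - u := by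
        rw [two_smul]; abel
      simpa [ConeLe, this] using hAmU
  have hua : ‖u‖ ≤ (2 * K + 1) * ‖a‖ := by
    have h1 : ‖u‖ ≤ ‖a + u‖ + ‖a‖ := by
      have h := norm_sub_le (a + u) a
      simpa using h
    have h2 : ‖(2:ℝ) • a‖ = 2 * ‖a‖ := by
      rw [norm_smul, Real.norm_eq_abs]; norm_num
    rw [h2] at hnormau
    nlinarith [norm_nonneg a]
  have han : ‖a‖ ≤ 2 * (K * ‖c‖) := by
    calc ‖a‖ ≤ ‖ds‖ + ‖dt‖ := norm_add_le _ _
    _ ≤ 2 * (K * ‖c‖) := by linarith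
  have hfin : ‖u‖ ≤ ε / 2 := by
    have h1 : ‖u‖ ≤ (2 * K + 1) * (2 * (K * ‖c‖)) :=
      le_trans hua (mul_le_mul_of_nonneg_left han (by positivity))
    have h2 : K * ‖c‖ ≤ K * (ε / (4 * K * (2 * K + 1))) :=
      mul_le_mul_of_nonneg_left hcnorm hKpos.le
    have h3 : (2 * K + 1) * (2 * (K * (ε / (4 * K * (2 * K + 1))))) = ε / 2 := by
      field_simp
      ring
    nlinarith [hKpos, norm_nonneg c]
  rw [Real.dist_eq, sub_zero, abs_of_nonneg (norm_nonneg _)]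
  calc ‖u‖ ≤ ε / 2 := hfin
  _ < ε := by linarith
end
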